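/- arXiv:2601.07636 — 2 statements merged into one kernel-verified Lean document; each statement's English description precedes it below -/
import Mathlib

section
/- Let L : ℝ^d → ℝ be differentiable with β-Lipschitz gradient, and let ρ > 0, 0 < η ≤ 1/β. Fix w ∈ ℝ^d with ∇L(w) ≠ 0, set δ = ρ ∇L(w)/‖∇L(w)‖ and w⁺ = w − η ∇L(w + δ). Then L(w⁺) ≤ L(w) − (η/2)‖∇L(w)‖² + (η/2) β² ρ². -/
set_option maxHeartbeats 1000000 in
open intervalIntegral in
lemma sam_descent_aux {d : ℕ} (L : EuclideanSpace ℝ (Fin d) → ℝ) (β : ℝ) (hβ : 0 ≤ β)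
    (hL : Differentiable ℝ L)
    (hLip : ∀ w v : EuclideanSpace ℝ (Fin d),
      ‖gradient L w - gradient L v‖ ≤ β * ‖w - v‖)
    (x y : EuclideanSpace ℝ (Fin d)) :
    L y ≤ L x + inner ℝ (gradient L x) (y - x) + β / 2 * ‖y - x‖ ^ 2 := by
  set u := y - x with hu
  have hg_cont : Continuous (gradient L) := by
    have : LipschitzWith β.toNNReal (gradient L) :=
      LipschitzWith.of_dist_le_mul (fun a b => by
        simpa [dist_eq_norm, Real.coe_toNNReal β hβ] using hLip a b)
    exact this.continuous
  have hline : Continuous fun t : ℝ => x + t • u :=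
    continuous_const.add (continuous_id.smul continuous_const)
  have hderiv : ∀ t : ℝ, HasDerivAt (fun t : ℝ => L (x + t • u))
      (inner ℝ (gradient L (x + t • u)) u : ℝ) t := by
    intro t
    have h1 : HasDerivAt (fun t : ℝ => x + t • u) u t := by
      simpa using ((hasDerivAt_id t).smul_const u).const_add x
    have h2 := ((hL (x + t • u)).hasGradientAt).hasFDerivAt
    have := h2.comp_hasDerivAt t h1
    exact this
  have hcont : Continuous fun t : ℝ => (inner ℝ (gradient L (x + t • u)) u : ℝ) :=
    Continuous.inner (hg_cont.comp hline) continuous_const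
  have hint : L y - L x = ∫ t in (0:ℝ)..1, (inner ℝ (gradient L (x + t • u)) u : ℝ) := by
    have := intervalIntegral.integral_eq_sub_of_hasDerivAt
      (f := fun t : ℝ => L (x + t • u)) (fun t _ => hderiv t)
      (hcont.intervalIntegrable 0 1)
    have hxy : x + u = y := by rw [hu]; abel
    rw [this]
    simp [hxy]
  have hpt : ∀ t ∈ Set.Icc (0:ℝ) 1,
      (inner ℝ (gradient L (x + t • u)) u : ℝ) ≤
        inner ℝ (gradient L x) u + β * t * ‖u‖ ^ 2 := by
    intro t ht
    have h1 : (inner ℝ (gradient L (x + t • u)) u : ℝ) -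
        inner ℝ (gradient L x) u = inner ℝ (gradient L (x + t • u) - gradient L x) u := by
      rw [inner_sub_left]
    have h2 : ‖gradient L (x + t • u) - gradient L x‖ ≤ β * (t * ‖u‖) := by
      have := hLip (x + t • u) x
      have hn : ‖x + t • u - x‖ = t * ‖u‖ := by
        simp [norm_smul, abs_of_nonneg ht.1]
      rw [hn] at this; exact this
    have h3 : (inner ℝ (gradient L (x + t • u) - gradient L x) u : ℝ) ≤
        β * (t * ‖u‖) * ‖u‖ :=
      (real_inner_le_norm _ _).trans (by
        apply mul_le_mul_of_nonneg_right h2 (norm_nonneg u))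
    nlinarith [h1, h3]
  have hib : IntervalIntegrable (fun t : ℝ =>
      (inner ℝ (gradient L x) u : ℝ) + β * t * ‖u‖ ^ 2) MeasureTheory.volume 0 1 :=
    Continuous.intervalIntegrable (by fun_prop) 0 1
  have hmono := intervalIntegral.integral_mono_on (by norm_num : (0:ℝ) ≤ 1)
    (hcont.intervalIntegrable 0 1) hib hpt
  have hcalc : (∫ t in (0:ℝ)..1, ((inner ℝ (gradient L x) u : ℝ) + β * t * ‖u‖ ^ 2)) =
      inner ℝ (gradient L x) u + β / 2 * ‖u‖ ^ 2 := by
    rw [intervalIntegral.integral_add (intervalIntegrable_const)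
      (Continuous.intervalIntegrable (by fun_prop) 0 1)]
    have : (∫ t in (0:ℝ)..1, β * t * ‖u‖ ^ 2) = β / 2 * ‖u‖ ^ 2 := by
      have : (fun t : ℝ => β * t * ‖u‖ ^ 2) = fun t : ℝ => (β * ‖u‖ ^ 2) * t := by
        funext t; ring
      rw [this, intervalIntegral.integral_const_mul, integral_id]
      ring
    rw [this]
    simp
  linarith [hint ▸ (hmono.trans_eq hcalc)]

set_option maxHeartbeats 1000000 in
/-- One-step descent inequality for the sharpness-aware (zeroth-order) update:
if L has β-Lipschitz gradient, δ = ρ ∇L(w)/‖∇L(w)‖ and w⁺ = w − η ∇L(w+δ) with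
0 < η ≤ 1/β, then L(w⁺) ≤ L(w) − (η/2)‖∇L(w)‖² + (η/2)β²ρ². -/
theorem sam_one_step_descent {d : ℕ} (L : EuclideanSpace ℝ (Fin d) → ℝ)
    (β : ℝ) (hL : Differentiable ℝ L)
    (hLip : ∀ w v : EuclideanSpace ℝ (Fin d),
      ‖gradient L w - gradient L v‖ ≤ β * ‖w - v‖)
    (ρ η : ℝ) (hρ : 0 < ρ) (hη : 0 < η) (hηβ : η ≤ 1 / β)
    (w : EuclideanSpace ℝ (Fin d)) (hgw : gradient L w ≠ 0) :
    L (w - η • gradient L (w + (ρ * ‖gradient L w‖⁻¹) • gradient L w)) ≤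
      L w - (η / 2) * ‖gradient L w‖ ^ 2 + (η / 2) * β ^ 2 * ρ ^ 2 := by
  have hβ : 0 < β := by
    by_contra h
    push_neg at h
    rcases lt_or_eq_of_le h with h' | h'
    · have : 1 / β < 0 := by exact div_neg_of_pos_of_neg one_pos h'
      linarith
    · rw [h', div_zero] at hηβ; linarith
  set g := gradient L w with hg
  set δ := (ρ * ‖g‖⁻¹) • g with hδ
  set g' := gradient L (w + δ) with hg'
  have hgn : 0 < ‖g‖ := norm_pos_iff.mpr hgw
  have hδn : ‖δ‖ = ρ := by
    rw [hδ, norm_smul, Real.norm_eq_abs,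
      abs_of_nonneg (mul_nonneg hρ.le (inv_nonneg.mpr (norm_nonneg g)))]
    field_simp
  have hgg' : ‖g' - g‖ ≤ β * ρ := by
    have := hLip (w + δ) w
    simpa [hδn] using this
  have key := sam_descent_aux L β hβ.le hL hLip w (w - η • g')
  have hy : w - η • g' - w = -(η • g') := by abel
  rw [hy] at key
  have hinner : (inner ℝ g (-(η • g')) : ℝ) = -(η * inner ℝ g g') := by
    rw [inner_neg_right, real_inner_smul_right]
  have hnorm : ‖-(η • g')‖ ^ 2 = η ^ 2 * ‖g'‖ ^ 2 := by
    rw [norm_neg, norm_smul, mul_pow, Real.norm_eq_abs, abs_of_nonneg hη.le]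
  rw [hinner, hnorm] at key
  -- key : L (w - η • g') ≤ L w - η * ⟪g,g'⟫ + β/2 * (η^2 * ‖g'‖^2)
  have hηβ1 : β * η ≤ 1 := by
    rw [le_div_iff₀ hβ] at hηβ; nlinarith
  have h1 : β / 2 * (η ^ 2 * ‖g'‖ ^ 2) ≤ η / 2 * ‖g'‖ ^ 2 := by
    nlinarith [sq_nonneg ‖g'‖, hη.le]
  have hpolar : ‖g' - g‖ ^ 2 = ‖g'‖ ^ 2 - 2 * inner ℝ g g' + ‖g‖ ^ 2 := by
    rw [← real_inner_self_eq_norm_sq, ← real_inner_self_eq_norm_sq,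
      ← real_inner_self_eq_norm_sq, inner_sub_sub_self]
    rw [real_inner_comm g' g]; ring
  have h2 : ‖g' - g‖ ^ 2 ≤ β ^ 2 * ρ ^ 2 := by
    nlinarith [norm_nonneg (g' - g)]
  nlinarith [key, h1, hpolar, h2]
end

section
/- Let M > 0, β > 0, η > 0, ρ > 0, and let (a_i)_{i≥1} and (ℓ_i)_{i≥1} be sequences of real numbers with a_i ≥ 0, |ℓ_i| ≤ M for all i, and satisfying for all i ≥ 1 the recursion ℓ_{i+1} ≤ ℓ_i − (η_i/2) a_i + (η_i/2) β² ρ_i², where η_i = η/√i and ρ_i = ρ/i^{1/4}. Then for every n ≥ 1, (1/n) ∑_{i=1}^{n} a_i ≤ 4M/(η √n) + β²ρ² (1 + log n)/√n. -/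
open Real

lemma flad_harmonic_le (n : ℕ) (hn : 1 ≤ n) :
    ∑ i ∈ Finset.Icc 1 n, (1 : ℝ) / i ≤ 1 + Real.log n := by
  induction n with
  | zero => omega
  | succ m ih =>
    rcases Nat.eq_or_lt_of_le hn with h | h
    · simp [← h]
    · have hm : 1 ≤ m := by omega
      have hml : (1 : ℝ) ≤ m := by exact_mod_cast hm
      have hmpos : (0 : ℝ) < m := by linarith
      have hm1pos : (0 : ℝ) < (m : ℝ) + 1 := by linarith
      rw [Finset.sum_Icc_succ_top (by omega : 1 ≤ m + 1)]
      have key : (1 : ℝ) / (m + 1) ≤ Real.log (m + 1) - Real.log m := by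
        have hx : (0 : ℝ) < (m : ℝ) / ((m : ℝ) + 1) := by positivity
        have := Real.log_le_sub_one_of_pos hx
        rw [Real.log_div (ne_of_gt hmpos) (ne_of_gt hm1pos)] at this
        have h2 : (m : ℝ) / ((m : ℝ) + 1) - 1 = -(1 / ((m : ℝ) + 1)) := by
          field_simp
          ring
        rw [h2] at this
        linarith
      have ihm := ih hm
      push_cast
      push_cast at key
      linarith

lemma telescope_ineq (η β ρ : ℝ) (a ℓ : ℕ → ℝ)
    (hrec : ∀ i : ℕ, 1 ≤ i →
      ℓ (i + 1) ≤ ℓ i - (η / Real.sqrt i / 2) * a i +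
        (η / Real.sqrt i / 2) * β ^ 2 * (ρ / (i : ℝ) ^ ((1 : ℝ) / 4)) ^ 2) :
    ∀ n : ℕ, 1 ≤ n →
      ℓ (n + 1) ≤ ℓ 1 - ∑ i ∈ Finset.Icc 1 n, (η / Real.sqrt i / 2) * a i +
        ∑ i ∈ Finset.Icc 1 n, (η / Real.sqrt i / 2) * β ^ 2 * (ρ / (i : ℝ) ^ ((1 : ℝ) / 4)) ^ 2 := by
  intro n hn
  induction n with
  | zero => omega
  | succ m ih =>
    rcases Nat.eq_or_lt_of_le hn with h | h
    · simpa [← h] using hrec 1 le_rfl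
    · have hm : 1 ≤ m := by omega
      have := hrec (m + 1) (by omega)
      rw [Finset.sum_Icc_succ_top (by omega : 1 ≤ m + 1),
        Finset.sum_Icc_succ_top (by omega : 1 ≤ m + 1)]
      have ihm := ih hm
      linarith

/-- Telescoping lemma for the convergence rate of Theorem 1: from the per-step descent
inequality ℓ_{i+1} ≤ ℓ_i − (η_i/2)a_i + (η_i/2)β²ρ_i² with η_i = η/√i, ρ_i = ρ/i^{1/4},
a_i ≥ 0 and |ℓ_i| ≤ M, it follows that
(1/n) ∑_{i=1}^n a_i ≤ 4M/(η√n) + β²ρ²(1 + log n)/√n. -/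
theorem flad_telescoping_rate (M β η ρ : ℝ) (hM : 0 < M) (hβ : 0 < β) (hη : 0 < η)
    (hρ : 0 < ρ) (a ℓ : ℕ → ℝ)
    (ha : ∀ i : ℕ, 1 ≤ i → 0 ≤ a i)
    (hℓ : ∀ i : ℕ, 1 ≤ i → |ℓ i| ≤ M)
    (hrec : ∀ i : ℕ, 1 ≤ i →
      ℓ (i + 1) ≤ ℓ i - (η / Real.sqrt i / 2) * a i +
        (η / Real.sqrt i / 2) * β ^ 2 * (ρ / (i : ℝ) ^ ((1 : ℝ) / 4)) ^ 2) :
    ∀ n : ℕ, 1 ≤ n →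
      (1 / (n : ℝ)) * ∑ i ∈ Finset.Icc 1 n, a i ≤
        4 * M / (η * Real.sqrt n) + β ^ 2 * ρ ^ 2 * (1 + Real.log n) / Real.sqrt n := by
  intro n hn
  have hnpos : (0 : ℝ) < n := by exact_mod_cast hn
  have hs : (0 : ℝ) < Real.sqrt n := Real.sqrt_pos.mpr hnpos
  set s := Real.sqrt n with hsdef
  have hss : s * s = n := Real.mul_self_sqrt hnpos.le
  -- rewriting the perturbation term
  have hdval : ∀ i : ℕ, 1 ≤ i →
      (η / Real.sqrt i / 2) * β ^ 2 * (ρ / (i : ℝ) ^ ((1 : ℝ) / 4)) ^ 2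
        = η * β ^ 2 * ρ ^ 2 / 2 * (1 / i) := by
    intro i hi
    have hipos : (0 : ℝ) < i := by exact_mod_cast hi
    have h4 : ((i : ℝ) ^ ((1 : ℝ) / 4)) ^ 2 = Real.sqrt i := by
      rw [← Real.rpow_natCast ((i : ℝ) ^ ((1 : ℝ) / 4)) 2, ← Real.rpow_mul hipos.le]
      norm_num
      rw [Real.sqrt_eq_rpow]
    have hsi : (0 : ℝ) < Real.sqrt i := Real.sqrt_pos.mpr hipos
    have hsq : Real.sqrt i * Real.sqrt i = (i : ℝ) := Real.mul_self_sqrt hipos.le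
    rw [div_pow, h4]
    field_simp
    ring_nf
    nlinarith [sq_nonneg (Real.sqrt i)]
  -- sum of perturbation terms
  have hsumd : ∑ i ∈ Finset.Icc 1 n, (η / Real.sqrt i / 2) * β ^ 2 * (ρ / (i : ℝ) ^ ((1 : ℝ) / 4)) ^ 2
      ≤ η * β ^ 2 * ρ ^ 2 / 2 * (1 + Real.log n) := by
    have : ∑ i ∈ Finset.Icc 1 n, (η / Real.sqrt i / 2) * β ^ 2 * (ρ / (i : ℝ) ^ ((1 : ℝ) / 4)) ^ 2
        = η * β ^ 2 * ρ ^ 2 / 2 * ∑ i ∈ Finset.Icc 1 n, (1 : ℝ) / i := by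
      rw [Finset.mul_sum]
      apply Finset.sum_congr rfl
      intro i hi
      exact hdval i (Finset.mem_Icc.mp hi).1
    rw [this]
    have := flad_harmonic_le n hn
    have hc : 0 ≤ η * β ^ 2 * ρ ^ 2 / 2 := by positivity
    exact mul_le_mul_of_nonneg_left this hc
  -- lower bound on sum of descent terms
  have hsumc : η / s / 2 * ∑ i ∈ Finset.Icc 1 n, a i
      ≤ ∑ i ∈ Finset.Icc 1 n, (η / Real.sqrt i / 2) * a i := by
    rw [Finset.mul_sum]
    apply Finset.sum_le_sum
    intro i hi
    obtain ⟨hi1, hi2⟩ := Finset.mem_Icc.mp hi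
    have hipos : (0 : ℝ) < i := by exact_mod_cast hi1
    have hsi : (0 : ℝ) < Real.sqrt i := Real.sqrt_pos.mpr hipos
    have hle : Real.sqrt i ≤ s := Real.sqrt_le_sqrt (by exact_mod_cast hi2)
    have : η / s / 2 ≤ η / Real.sqrt i / 2 := by
      apply div_le_div_of_nonneg_right _ (by norm_num)
      exact div_le_div_of_nonneg_left hη.le hsi hle
    exact mul_le_mul_of_nonneg_right this (ha i hi1)
  have htel := telescope_ineq η β ρ a ℓ hrec n hn
  have h1 := hℓ 1 le_rfl
  have h2 := hℓ (n + 1) (by omega)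
  have hb1 : ℓ 1 ≤ M := (abs_le.mp h1).2
  have hb2 : -M ≤ ℓ (n + 1) := (abs_le.mp h2).1
  have hS : η / s / 2 * ∑ i ∈ Finset.Icc 1 n, a i
      ≤ 2 * M + η * β ^ 2 * ρ ^ 2 / 2 * (1 + Real.log n) := by linarith
  -- final algebra
  have hSnn : 0 ≤ ∑ i ∈ Finset.Icc 1 n, a i :=
    Finset.sum_nonneg fun i hi => ha i (Finset.mem_Icc.mp hi).1
  rw [div_add_div _ _ (by positivity : η * s ≠ 0) (ne_of_gt hs),
    le_div_iff₀ (by positivity : (0:ℝ) < η * s * s)]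
  have hmul := mul_le_mul_of_nonneg_left hS (by positivity : (0:ℝ) ≤ 2 * s)
  have hns : η * s * s = η * n := by rw [mul_assoc, hss]
  rw [hns]
  have hL : (1 / (n : ℝ) * ∑ i ∈ Finset.Icc 1 n, a i) * (η * n)
      = η * ∑ i ∈ Finset.Icc 1 n, a i := by
    field_simp
  rw [hL]
  have hη2 : 2 * s * (η / s / 2) = η := by field_simp
  calc η * ∑ i ∈ Finset.Icc 1 n, a i
      = 2 * s * (η / s / 2 * ∑ i ∈ Finset.Icc 1 n, a i) := by rw [← mul_assoc, hη2]
    _ ≤ 2 * s * (2 * M + η * β ^ 2 * ρ ^ 2 / 2 * (1 + Real.log n)) := hmul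
    _ = 4 * M * s + η * s * (β ^ 2 * ρ ^ 2 * (1 + Real.log n)) := by ring
end
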